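/- arXiv:2101.01963 — 3 statements merged into one kernel-verified Lean document; each statement's English description precedes it below -/
import Mathlib

section
/- Let τ > 0, α ∈ (0,1), and define δ_τ(ζ) = (1 − ζ)/τ. There exist positive constants C_0 and C_1 depending only on θ (not on τ) such that for every complex z with |arg z| = θ ∈ (π/2, π) and |z| ≤ π/(τ sin θ), one has C_0 |z| ≤ |δ_τ(e^{−zτ})| ≤ C_1 |z|. -/
open Complex Real

/-- Two-sided bound for the backward Euler symbol: there exist `C₀, C₁ > 0`
depending only on `θ` such that `C₀|z| ≤ |(1 − e^{−zτ})/τ| ≤ C₁|z|` for all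
`τ > 0` and `z` with `|arg z| = θ` and `|z| ≤ π/(τ sin θ)`. -/
theorem backward_euler_symbol_bounds (θ : ℝ) (hθ₁ : Real.pi / 2 < θ) (hθ₂ : θ < Real.pi) :
    ∃ C₀ C₁ : ℝ, 0 < C₀ ∧ 0 < C₁ ∧
      ∀ (τ : ℝ), 0 < τ → ∀ z : ℂ, z ≠ 0 → |z.arg| = θ →
        ‖z‖ ≤ Real.pi / (τ * Real.sin θ) →
        C₀ * ‖z‖ ≤ ‖(1 - Complex.exp (-z * τ)) / τ‖ ∧
        ‖(1 - Complex.exp (-z * τ)) / τ‖ ≤ C₁ * ‖z‖ := by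
  have hpi := Real.pi_pos
  have hθ0 : 0 < θ := lt_trans (by linarith) hθ₁
  have hs : 0 < Real.sin θ := Real.sin_pos_of_pos_of_lt_pi hθ0 hθ₂
  have hc : Real.cos θ < 0 := Real.cos_neg_of_pi_div_two_lt_of_lt hθ₁ (by linarith)
  refine ⟨-Real.cos θ, 2 + Real.exp (Real.pi / Real.sin θ), by linarith, by positivity, ?_⟩
  intro τ hτ z hz harg hbound
  set A := ‖z‖ with hA
  have hA0 : 0 ≤ A := norm_nonneg z
  have hcos : Real.cos z.arg = Real.cos θ := by rw [← Real.cos_abs, harg]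
  have hre : z.re = A * Real.cos θ := by rw [← Complex.norm_mul_cos_arg z, hcos]
  have hureq : (-z * (τ:ℂ)).re = -(z.re * τ) := by simp [Complex.mul_re]
  have huabs : ‖-z * (τ:ℂ)‖ = A * τ := by
    rw [norm_mul, norm_neg, Complex.norm_of_nonneg hτ.le]
  have hexpabs : ‖Complex.exp (-z * τ)‖ = Real.exp (-(z.re * τ)) := by
    rw [Complex.norm_exp, hureq]
  have hdiv : ‖(1 - Complex.exp (-z * τ)) / τ‖
      = ‖1 - Complex.exp (-z * τ)‖ / τ := by
    rw [norm_div, Complex.norm_of_nonneg hτ.le]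
  have hAτ : A * τ ≤ Real.pi / Real.sin θ := by
    have h1 : A * (τ * Real.sin θ) ≤ Real.pi := by
      rw [← le_div_iff₀ (by positivity)]; exact hbound
    rw [le_div_iff₀ hs]; nlinarith
  constructor
  · -- lower bound
    have h1 : Real.exp (-(z.re * τ)) - 1 ≤ ‖1 - Complex.exp (-z * τ)‖ := by
      calc Real.exp (-(z.re * τ)) - 1
          = ‖Complex.exp (-z * τ)‖ - ‖(1:ℂ)‖ := by rw [hexpabs, norm_one]
        _ ≤ ‖Complex.exp (-z * τ) - 1‖ :=
            norm_sub_norm_le _ _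
        _ = ‖1 - Complex.exp (-z * τ)‖ := norm_sub_rev _ _
    have h2 : -(z.re * τ) + 1 ≤ Real.exp (-(z.re * τ)) := Real.add_one_le_exp _
    have h3 : -(z.re * τ) = -Real.cos θ * A * τ := by rw [hre]; ring
    rw [hdiv, le_div_iff₀ hτ]
    nlinarith
  · -- upper bound
    rw [hdiv, div_le_iff₀ hτ]
    have hexp1 : (0:ℝ) < Real.exp (Real.pi / Real.sin θ) := Real.exp_pos _
    rcases le_or_gt (A * τ) 1 with hle | hlt
    · have := Complex.norm_exp_sub_one_le (x := -z * τ) (by rw [huabs]; exact hle)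
      have heq : ‖1 - Complex.exp (-z * τ)‖
          = ‖Complex.exp (-z * τ) - 1‖ := (norm_sub_rev _ _).symm
      rw [heq]
      calc ‖Complex.exp (-z * τ) - 1‖ ≤ 2 * ‖-z * τ‖ := this
        _ = 2 * (A * τ) := by rw [huabs]
        _ ≤ (2 + Real.exp (Real.pi / Real.sin θ)) * A * τ := by nlinarith [mul_nonneg (mul_nonneg hexp1.le hA0) hτ.le]
    · have hReu : -(z.re * τ) ≤ Real.pi / Real.sin θ := by
        have hcos1 : -Real.cos θ ≤ 1 := by nlinarith [Real.neg_one_le_cos θ]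
        have : -(z.re * τ) = -Real.cos θ * (A * τ) := by rw [hre]; ring
        rw [this]
        nlinarith
      calc ‖1 - Complex.exp (-z * τ)‖
          ≤ ‖(1:ℂ)‖ + ‖Complex.exp (-z * τ)‖ :=
            norm_sub_le _ _
        _ = 1 + Real.exp (-(z.re * τ)) := by rw [norm_one, hexpabs]
        _ ≤ 1 + Real.exp (Real.pi / Real.sin θ) := by
            have := Real.exp_le_exp.mpr hReu; linarith
        _ ≤ (1 + Real.exp (Real.pi / Real.sin θ)) * (A * τ) := by nlinarith
        _ ≤ (2 + Real.exp (Real.pi / Real.sin θ)) * A * τ := by nlinarith [mul_nonneg (mul_nonneg hexp1.le hA0) hτ.le]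
end

section
/- Let α ∈ (0,1), τ > 0, θ ∈ (π/2, π). There exists C depending only on θ and α such that for all z with |arg z| = θ, |z| ≤ π/(τ sin θ), one has |((1 − e^{−zτ})/τ)^α − z^α| ≤ C τ |z|^{α+1}. -/
open Complex Real

lemma exp_lip {a b : ℂ} {m : ℝ} (ha : a.re ≤ m) (hb : b.re ≤ m) :
    ‖Complex.exp a - Complex.exp b‖ ≤ Real.exp m * ‖a - b‖ := by
  have h := Convex.norm_image_sub_le_of_norm_hasDerivWithin_le
    (f := Complex.exp) (f' := Complex.exp) (s := {x : ℂ | x.re ≤ m})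
    (fun x _ => (Complex.hasDerivAt_exp x).hasDerivWithinAt)
    (fun x hx => by
      rw [Complex.norm_exp]; exact Real.exp_le_exp.2 hx)
    (convex_halfSpace_re_le m) hb ha
  simpa using h

lemma exp_sub_one_abs {u : ℂ} {m : ℝ} (hm : u.re ≤ m) (hm0 : 0 ≤ m) :
    ‖Complex.exp u - 1‖ ≤ Real.exp m * ‖u‖ := by
  simpa using exp_lip (b := 0) hm hm0

lemma exp_quad {u : ℂ} {m r : ℝ} (hm : u.re ≤ m) (hm0 : 0 ≤ m) (hr : ‖u‖ ≤ r) :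
    ‖Complex.exp u - 1 - u‖ ≤ (Real.exp m * r) * ‖u‖ := by
  have h := Convex.norm_image_sub_le_of_norm_hasDerivWithin_le
    (f := fun v => Complex.exp v - 1 - v) (f' := fun v => Complex.exp v - 1)
    (s := segment ℝ (0:ℂ) u) (C := Real.exp m * r)
    (fun x _ => (((Complex.hasDerivAt_exp x).sub_const 1).sub (hasDerivAt_id x)).hasDerivWithinAt)
    ?_ (convex_segment _ _) (left_mem_segment ℝ 0 u) (right_mem_segment ℝ 0 u)
  · simpa using h
  · rintro x hx
    rw [segment_eq_image] at hx
    obtain ⟨t, ht, rfl⟩ := hx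
    simp only [smul_zero, zero_add]
    have h1 : ((t:ℝ) • u).re ≤ m := by
      rcases le_or_gt 0 u.re with h | h
      · simp only [Complex.real_smul, Complex.mul_re, Complex.ofReal_re, Complex.ofReal_im]
        nlinarith [ht.1, ht.2]
      · simp only [Complex.real_smul, Complex.mul_re, Complex.ofReal_re, Complex.ofReal_im]
        nlinarith [ht.1, ht.2]
    have h2 : ‖(t:ℝ) • u‖ ≤ r := by
      have : ‖(t:ℝ) • u‖ = |t| * ‖u‖ := by
        rw [norm_smul, Real.norm_eq_abs]
      rw [this, _root_.abs_of_nonneg ht.1]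
      have := norm_nonneg u
      nlinarith [ht.1, ht.2]
    calc ‖Complex.exp ((t:ℝ) • u) - 1‖ ≤ Real.exp m * ‖(t:ℝ) • u‖ :=
          exp_sub_one_abs h1 hm0
      _ ≤ Real.exp m * r := by
          exact mul_le_mul_of_nonneg_left h2 (Real.exp_nonneg m)
      _ = Real.exp m * r := rfl

lemma log_diff_real {m a b : ℝ} (hm : 0 < m) (ha : m ≤ a) (hb : m ≤ b) :
    |Real.log a - Real.log b| ≤ |a - b| / m := by
  have key : ∀ x y : ℝ, m ≤ x → m ≤ y → y ≤ x → Real.log x - Real.log y ≤ (x - y) / m := by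
    intro x y hx hy hxy
    have hy0 : 0 < y := lt_of_lt_of_le hm hy
    have hx0 : 0 < x := lt_of_lt_of_le hm hx
    rw [← Real.log_div hx0.ne' hy0.ne']
    calc Real.log (x / y) ≤ x / y - 1 := Real.log_le_sub_one_of_pos (div_pos hx0 hy0)
      _ = (x - y) / y := by field_simp
      _ ≤ (x - y) / m := by gcongr
  rcases le_total b a with h | h
  · have h0 : (0:ℝ) ≤ Real.log a - Real.log b :=
      sub_nonneg.2 (Real.log_le_log (lt_of_lt_of_le hm hb) h)
    rw [_root_.abs_of_nonneg h0, _root_.abs_of_nonneg (sub_nonneg.2 h)]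
    exact key a b ha hb h
  · have h0 : (0:ℝ) ≤ Real.log b - Real.log a :=
      sub_nonneg.2 (Real.log_le_log (lt_of_lt_of_le hm ha) h)
    rw [_root_.abs_of_nonpos (by linarith), _root_.abs_of_nonpos (by linarith)]
    have e : (b - a) / m = -(a - b) / m := by ring
    linarith [key b a hb ha h]

lemma arg_diff {a b : ℂ} {m : ℝ} (hm : 0 < m) (ha : m ≤ ‖a‖)
    (hb : m ≤ ‖b‖) (haim : 0 ≤ a.im) (hbim : 0 ≤ b.im)
    (hapi : a.arg ≠ π) (hbpi : b.arg ≠ π) :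
    |a.arg - b.arg| ≤ π * ‖a - b‖ / (2 * m) := by
  have ha0 : a ≠ 0 := fun h => by simp [h] at ha; linarith
  have hb0 : b ≠ 0 := fun h => by simp [h] at hb; linarith
  have hA : (0:ℝ) < ‖a‖ := lt_of_lt_of_le hm ha
  have hB : (0:ℝ) < ‖b‖ := lt_of_lt_of_le hm hb
  set A := ‖a‖
  set B := ‖b‖
  set φ := a.arg - b.arg with hφ
  have harga : 0 ≤ a.arg := Complex.arg_nonneg_iff.2 haim
  have hargb : 0 ≤ b.arg := Complex.arg_nonneg_iff.2 hbim
  have harga' : a.arg < π := lt_of_le_of_ne (Complex.arg_le_pi a) hapi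
  have hargb' : b.arg < π := lt_of_le_of_ne (Complex.arg_le_pi b) hbpi
  have hφπ : |φ| ≤ π := by rw [abs_le]; constructor <;> [linarith; linarith]
  -- re identity
  have hre : (a * (starRingEnd ℂ) b).re = A * B * Real.cos φ := by
    have e1 : a.re = A * Real.cos a.arg := by
      rw [Complex.cos_arg ha0]; field_simp; rfl
    have e2 : a.im = A * Real.sin a.arg := by
      rw [Complex.sin_arg]; field_simp; rfl
    have e3 : b.re = B * Real.cos b.arg := by
      rw [Complex.cos_arg hb0]; field_simp; rfl
    have e4 : b.im = B * Real.sin b.arg := by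
      rw [Complex.sin_arg]; field_simp; rfl
    have : (a * (starRingEnd ℂ) b).re = a.re * b.re + a.im * b.im := by
      simp [Complex.mul_re]
    rw [this, e1, e2, e3, e4, hφ, Real.cos_sub]
    ring
  have hchord : (‖a - b‖)^2 = A^2 + B^2 - 2 * (A * B * Real.cos φ) := by
    rw [← hre, Complex.sq_norm, Complex.normSq_sub, ← Complex.sq_norm, ← Complex.sq_norm]
  have hsin : Real.sin (φ/2)^2 = 1/2 - Real.cos φ / 2 := by
    have := Real.sin_sq_eq_half_sub (φ/2)
    rw [this]; ring_nf
  have hsinabs : Real.sin (|φ|/2)^2 = Real.sin (φ/2)^2 := by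
    rcases abs_cases φ with ⟨h, _⟩ | ⟨h, _⟩ <;> rw [h]
    rw [neg_div, Real.sin_neg]; ring
  have hjordan : |φ| / π ≤ Real.sin (|φ|/2) := by
    have h1 : 2/π * (|φ|/2) ≤ Real.sin (|φ|/2) :=
      Real.mul_le_sin (by positivity) (by linarith)
    have hπ : (0:ℝ) < π := Real.pi_pos
    calc |φ|/π = 2/π * (|φ|/2) := by field_simp
      _ ≤ _ := h1
  have hπ : (0:ℝ) < π := Real.pi_pos
  have hsq : (2 * m * (|φ|/π))^2 ≤ (‖a - b‖)^2 := by
    have h1 : (|φ|/π)^2 ≤ Real.sin (|φ|/2)^2 := by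
      have := pow_le_pow_left₀ (by positivity) hjordan 2
      exact this
    rw [hsinabs, hsin] at h1
    have hAB : m * m ≤ A * B := mul_le_mul ha hb hm.le hA.le
    rw [hchord]
    nlinarith [sq_nonneg (A - B), sq_nonneg (|φ|/π)]
  have hfin : 2 * m * (|φ|/π) ≤ ‖a - b‖ := by
    nlinarith [abs_nonneg φ, norm_nonneg (a - b),
      mul_nonneg (mul_nonneg (by norm_num : (0:ℝ) ≤ 2) hm.le) (div_nonneg (abs_nonneg φ) hπ.le)]
  rw [le_div_iff₀ (by positivity : (0:ℝ) < 2 * m)]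
  calc |φ| * (2 * m) = (2 * m * (|φ|/π)) * π := by field_simp
    _ ≤ ‖a - b‖ * π := mul_le_mul_of_nonneg_right hfin hπ.le
    _ = π * ‖a - b‖ := mul_comm _ _

lemma clog_diff {a b : ℂ} {m : ℝ} (hm : 0 < m)
    (hlr : |Real.log (‖a‖) - Real.log (‖b‖)| ≤
        |‖a‖ - ‖b‖| / m)
    (har : |a.arg - b.arg| ≤ π * ‖a - b‖ / (2 * m)) :
    ‖Complex.log a - Complex.log b‖ ≤
      (1 + π / 2) * ‖a - b‖ / m := by
  have h1 : Complex.log a - Complex.log b =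
      ((Real.log (‖a‖) - Real.log (‖b‖) : ℝ) : ℂ)
      + ((a.arg - b.arg : ℝ) : ℂ) * I := by
    rw [Complex.log, Complex.log]; push_cast; ring
  have h2 : |‖a‖ - ‖b‖| ≤ ‖a - b‖ :=
    abs_norm_sub_norm_le a b
  have hπ : (0:ℝ) < π := Real.pi_pos
  rw [h1]
  calc ‖((Real.log (‖a‖) - Real.log (‖b‖) : ℝ) : ℂ)
        + ((a.arg - b.arg : ℝ) : ℂ) * I‖
      ≤ ‖((Real.log (‖a‖) - Real.log (‖b‖) : ℝ) : ℂ)‖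
        + ‖((a.arg - b.arg : ℝ) : ℂ) * I‖ := norm_add_le _ _
    _ = |Real.log (‖a‖) - Real.log (‖b‖)| + |a.arg - b.arg| := by
        simp [← Complex.ofReal_sub, Complex.norm_real, norm_mul, Complex.norm_I]
    _ ≤ |‖a‖ - ‖b‖| / m + π * ‖a - b‖ / (2 * m) :=
        add_le_add hlr har
    _ ≤ ‖a - b‖ / m + π * ‖a - b‖ / (2 * m) := by gcongr
    _ = (1 + π / 2) * ‖a - b‖ / m := by field_simp

lemma delta_facts {θ τ : ℝ} {z : ℂ} (hθ₁ : Real.pi / 2 < θ) (hθ₂ : θ < Real.pi)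
    (hτ : 0 < τ) (hz : z ≠ 0) (harg : z.arg = θ)
    (hle : ‖z‖ ≤ Real.pi / (τ * Real.sin θ)) :
    0 ≤ ((1 - Complex.exp (-z * τ)) / (τ:ℂ)).im ∧
      ((1 - Complex.exp (-z * τ)) / (τ:ℂ)).arg ≠ π := by
  have hsθ : 0 < Real.sin θ := Real.sin_pos_of_pos_of_lt_pi (by linarith [Real.pi_pos]) hθ₂
  have hr : 0 < ‖z‖ := norm_pos_iff.2 hz
  set r := ‖z‖ with hrdef
  have him : z.im = r * Real.sin θ := by
    have := Complex.sin_arg z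
    rw [harg] at this
    rw [this, hrdef]; field_simp [norm_ne_zero_iff.2 hz]
  have hτrs : τ * (r * Real.sin θ) ≤ π := by
    rw [le_div_iff₀ (by positivity)] at hle
    nlinarith
  set u := -z * (τ:ℂ) with hu
  have huim : u.im = -(τ * (r * Real.sin θ)) := by
    simp [hu, Complex.mul_im, him]; ring
  have hyv : 0 < τ * (r * Real.sin θ) := by positivity
  have hexpim : (Complex.exp u).im = -(Real.exp u.re * Real.sin (τ * (r * Real.sin θ))) := by
    rw [Complex.exp_im, huim, Real.sin_neg]; ring
  have hsin0 : 0 ≤ Real.sin (τ * (r * Real.sin θ)) :=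
    Real.sin_nonneg_of_nonneg_of_le_pi hyv.le hτrs
  have hδim : ((1 - Complex.exp u) / (τ:ℂ)).im =
      (Real.exp u.re * Real.sin (τ * (r * Real.sin θ))) / τ := by
    rw [Complex.div_ofReal_im, Complex.sub_im, hexpim]
    simp
  constructor
  · rw [hδim]; positivity
  · rw [Ne, Complex.arg_eq_pi_iff]
    rintro ⟨hre', him'⟩
    rw [hδim] at him'
    have hsin1 : Real.sin (τ * (r * Real.sin θ)) = 0 := by
      by_contra hne
      have hpos : 0 < Real.sin (τ * (r * Real.sin θ)) := lt_of_le_of_ne hsin0 (Ne.symm hne)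
      have : 0 < Real.exp u.re * Real.sin (τ * (r * Real.sin θ)) / τ := by positivity
      linarith
    have hyvπ : τ * (r * Real.sin θ) = π := by
      by_contra hne
      have : τ * (r * Real.sin θ) < π := lt_of_le_of_ne hτrs hne
      linarith [Real.sin_pos_of_pos_of_lt_pi hyv this]
    have hexpre : (Complex.exp u).re = -(Real.exp u.re) := by
      rw [Complex.exp_re, huim, hyvπ, Real.cos_neg, Real.cos_pi]; ring
    rw [Complex.div_ofReal_re, Complex.sub_re, hexpre] at hre'
    have h1 : Real.exp u.re > 0 := Real.exp_pos _
    have : (0:ℝ) < ((1:ℂ).re + Real.exp u.re) / τ := by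
      simp only [Complex.one_re]; positivity
    simp only [Complex.one_re] at hre' this
    have e2 : ((1:ℝ) - -Real.exp u.re) / τ = (1 + Real.exp u.re) / τ := by ring
    linarith [hre', this]
set_option maxHeartbeats 1000000 in
lemma master {θ α : ℝ} (hθ₁ : Real.pi / 2 < θ) (hθ₂ : θ < Real.pi)
    (hα₀ : 0 < α) (hα₁ : α < 1) {τ : ℝ} (hτ : 0 < τ) {z : ℂ} (hz : z ≠ 0)
    (harg : z.arg = θ) (hle : ‖z‖ ≤ Real.pi / (τ * Real.sin θ)) :
    ‖((1 - Complex.exp (-z * τ)) / τ) ^ (α : ℂ) - z ^ (α : ℂ)‖ ≤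
      (((1 + Real.exp (π / Real.sin θ) * (π / Real.sin θ)) *
        ((1 + π / 2) * Real.exp (π / Real.sin θ))) / (-Real.cos θ)) * τ
        * (‖z‖) ^ (α + 1) := by
  have hπ : (0:ℝ) < π := Real.pi_pos
  have hsθ : 0 < Real.sin θ := Real.sin_pos_of_pos_of_lt_pi (by linarith) hθ₂
  have hcθ : Real.cos θ < 0 := Real.cos_neg_of_pi_div_two_lt_of_lt hθ₁ (by linarith)
  set c : ℝ := -Real.cos θ with hcdef
  have hc : 0 < c := by simp [hcdef]; linarith
  have hc1 : c ≤ 1 := by have := Real.neg_one_le_cos θ; simp [hcdef]; linarith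
  set R : ℝ := π / Real.sin θ with hRdef
  have hR : 0 < R := by positivity
  have hr : 0 < ‖z‖ := norm_pos_iff.2 hz
  set r := ‖z‖ with hrdef
  have hτr : τ * r ≤ R := by
    rw [le_div_iff₀ (by positivity)] at hle
    rw [hRdef, le_div_iff₀ hsθ]
    nlinarith
  set u := -z * (τ:ℂ) with hu
  have hzre : z.re = r * Real.cos θ := by
    have := Complex.cos_arg hz
    rw [harg] at this
    rw [this, hrdef]; field_simp [norm_ne_zero_iff.2 hz]
  have hzim : z.im = r * Real.sin θ := by
    have := Complex.sin_arg z
    rw [harg] at this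
    rw [this, hrdef]; field_simp [norm_ne_zero_iff.2 hz]
  have hure : u.re = c * (τ * r) := by
    simp [hu, Complex.mul_re, hzre, hcdef]; ring
  have huabs : ‖u‖ = τ * r := by
    rw [hu, norm_mul, norm_neg, Complex.norm_real, Real.norm_eq_abs, _root_.abs_of_pos hτ]
    ring
  have hureR : u.re ≤ R := by rw [hure]; nlinarith
  have hquad : ‖Complex.exp u - 1 - u‖ ≤ (Real.exp R * (τ * r)) * (τ * r) := by
    have := exp_quad hureR hR.le (le_of_eq huabs)
    rwa [huabs] at this
  set δ := (1 - Complex.exp u) / (τ:ℂ) with hδdef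
  have hτℂ : (τ:ℂ) ≠ 0 := Complex.ofReal_ne_zero.2 hτ.ne'
  have hδz : δ - z = -(Complex.exp u - 1 - u) / (τ:ℂ) := by
    rw [hδdef, hu]
    field_simp
    ring
  have hD : ‖δ - z‖ ≤ Real.exp R * τ * r ^ 2 := by
    rw [hδz, norm_div, norm_neg, Complex.norm_real, Real.norm_eq_abs, _root_.abs_of_pos hτ]
    rw [div_le_iff₀ hτ]
    calc ‖Complex.exp u - 1 - u‖ ≤ (Real.exp R * (τ * r)) * (τ * r) := hquad
      _ = Real.exp R * τ * r ^ 2 * τ := by ring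
  have habse : ‖Complex.exp u‖ = Real.exp (c * (τ * r)) := by
    rw [Complex.norm_exp, hure]
  have hlow : c * r ≤ ‖δ‖ := by
    have h1 : ‖Complex.exp u‖ - 1 ≤ ‖Complex.exp u - 1‖ := by
      have := abs_norm_sub_norm_le (Complex.exp u) 1
      simp only [norm_one] at this
      calc ‖Complex.exp u‖ - 1 ≤ |‖Complex.exp u‖ - 1| := le_abs_self _
        _ ≤ ‖Complex.exp u - 1‖ := this
    have h2 : c * (τ * r) ≤ ‖Complex.exp u‖ - 1 := by
      rw [habse]
      have := Real.add_one_le_exp (c * (τ * r))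
      linarith
    have h3 : ‖1 - Complex.exp u‖ = ‖Complex.exp u - 1‖ := by
      rw [← norm_neg]; ring_nf
    have : ‖δ‖ = ‖1 - Complex.exp u‖ / τ := by
      rw [hδdef, norm_div, Complex.norm_real, Real.norm_eq_abs, _root_.abs_of_pos hτ]
    rw [this, h3, le_div_iff₀ hτ]
    nlinarith
  have hδ0 : δ ≠ 0 := by
    intro h
    rw [h] at hlow
    simp at hlow
    nlinarith
  have hup : ‖δ‖ ≤ (1 + Real.exp R * R) * r := by
    have h1 : ‖δ‖ ≤ ‖z‖ + ‖δ - z‖ := by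
      calc ‖δ‖ = ‖z + (δ - z)‖ := by ring_nf
        _ ≤ ‖z‖ + ‖δ - z‖ := norm_add_le _ _
    have h2 : Real.exp R * τ * r ^ 2 ≤ Real.exp R * R * r := by
      have h5 : Real.exp R * (τ * r) * r ≤ Real.exp R * R * r :=
        mul_le_mul_of_nonneg_right (mul_le_mul_of_nonneg_left hτr (Real.exp_nonneg R)) hr.le
      calc Real.exp R * τ * r ^ 2 = Real.exp R * (τ * r) * r := by ring
        _ ≤ Real.exp R * R * r := h5
    rw [← hrdef] at h1
    calc ‖δ‖ ≤ r + Real.exp R * τ * r ^ 2 := by linarith [hD]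
      _ ≤ r + Real.exp R * R * r := by linarith
      _ = (1 + Real.exp R * R) * r := by ring
  obtain ⟨hδim, hδπ⟩ := delta_facts hθ₁ hθ₂ hτ hz harg hle
  have hδim' : 0 ≤ δ.im := hδim
  have hδπ' : δ.arg ≠ π := hδπ
  have hzim' : 0 ≤ z.im := by rw [hzim]; positivity
  have hzπ : z.arg ≠ π := by rw [harg]; exact ne_of_lt hθ₂
  have hcr : 0 < c * r := by positivity
  have hcrδ : c * r ≤ ‖δ‖ := hlow
  have hcrz : c * r ≤ ‖z‖ := by rw [← hrdef]; nlinarith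
  have hlog : ‖Complex.log δ - Complex.log z‖ ≤
      (1 + π / 2) * ‖δ - z‖ / (c * r) :=
    clog_diff hcr (log_diff_real hcr hcrδ hcrz)
      (arg_diff hcr hcrδ hcrz hδim' hzim' hδπ' hzπ)
  set C₁ : ℝ := 1 + Real.exp R * R with hC₁def
  have hC₁1 : 1 ≤ C₁ := by
    have := Real.exp_pos R
    nlinarith
  have hC₁ : 0 < C₁ := by linarith
  set m : ℝ := Real.log (C₁ * r) * α with hmdef
  have hrea : (Complex.log δ * (α:ℂ)).re = Real.log (‖δ‖) * α := by
    simp [Complex.mul_re, Complex.log_re]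
  have hreb : (Complex.log z * (α:ℂ)).re = Real.log (‖z‖) * α := by
    simp [Complex.mul_re, Complex.log_re]
  have hma : (Complex.log δ * (α:ℂ)).re ≤ m := by
    rw [hrea, hmdef]
    have h1 : Real.log (‖δ‖) ≤ Real.log (C₁ * r) :=
      Real.log_le_log (lt_of_lt_of_le hcr hlow) hup
    exact mul_le_mul_of_nonneg_right h1 hα₀.le
  have hmb : (Complex.log z * (α:ℂ)).re ≤ m := by
    rw [hreb, hmdef, ← hrdef]
    have h1 : Real.log r ≤ Real.log (C₁ * r) := by
      apply Real.log_le_log hr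
      nlinarith
    exact mul_le_mul_of_nonneg_right h1 hα₀.le
  have hexpm : Real.exp m = (C₁ * r) ^ α := by
    rw [hmdef, Real.rpow_def_of_pos (by positivity)]
  have hcpow : ((1 - Complex.exp (-z * τ)) / (τ:ℂ)) ^ (α:ℂ) - z ^ (α:ℂ) =
      Complex.exp (Complex.log δ * (α:ℂ)) - Complex.exp (Complex.log z * (α:ℂ)) := by
    rw [Complex.cpow_def_of_ne_zero hδ0, Complex.cpow_def_of_ne_zero hz]
  have hsub : ‖Complex.log δ * (α:ℂ) - Complex.log z * (α:ℂ)‖ =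
      ‖Complex.log δ - Complex.log z‖ * α := by
    rw [← sub_mul, norm_mul]
    simp [Complex.norm_real, _root_.abs_of_pos hα₀]
  have hmain : ‖((1 - Complex.exp (-z * τ)) / (τ:ℂ)) ^ (α:ℂ) - z ^ (α:ℂ)‖ ≤
      (C₁ * r) ^ α * (‖Complex.log δ - Complex.log z‖ * α) := by
    rw [hcpow, ← hexpm, ← hsub]
    exact exp_lip hma hmb
  have hCra : (C₁ * r) ^ α ≤ C₁ * r ^ α := by
    rw [Real.mul_rpow hC₁.le hr.le]
    have h1 : C₁ ^ α ≤ C₁ ^ (1:ℝ) :=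
      Real.rpow_le_rpow_of_exponent_le hC₁1 (by linarith)
    rw [Real.rpow_one] at h1
    exact mul_le_mul_of_nonneg_right h1 (Real.rpow_nonneg hr.le α)
  have hlog2 : ‖Complex.log δ - Complex.log z‖ * α ≤
      ((1 + π / 2) * Real.exp R / c) * τ * r := by
    have h1 : ‖Complex.log δ - Complex.log z‖ ≤
        (1 + π / 2) * (Real.exp R * τ * r ^ 2) / (c * r) := by
      calc ‖Complex.log δ - Complex.log z‖ ≤
          (1 + π / 2) * ‖δ - z‖ / (c * r) := hlog
        _ ≤ (1 + π / 2) * (Real.exp R * τ * r ^ 2) / (c * r) := by gcongr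
    have h2 : (1 + π / 2) * (Real.exp R * τ * r ^ 2) / (c * r) =
        ((1 + π / 2) * Real.exp R / c) * τ * r := by
      field_simp
    have h3 : ‖Complex.log δ - Complex.log z‖ * α ≤
        ‖Complex.log δ - Complex.log z‖ * 1 := by
      exact mul_le_mul_of_nonneg_left (by linarith) (norm_nonneg _)
    rw [mul_one] at h3
    calc ‖Complex.log δ - Complex.log z‖ * α ≤
        ‖Complex.log δ - Complex.log z‖ := h3
      _ ≤ ((1 + π / 2) * Real.exp R / c) * τ * r := by rw [← h2]; exact h1
  calc ‖((1 - Complex.exp (-z * τ)) / (τ:ℂ)) ^ (α:ℂ) - z ^ (α:ℂ)‖ ≤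
      (C₁ * r) ^ α * (‖Complex.log δ - Complex.log z‖ * α) := hmain
    _ ≤ (C₁ * r ^ α) * (((1 + π / 2) * Real.exp R / c) * τ * r) := by
        apply mul_le_mul hCra hlog2 (by positivity) (by positivity)
    _ = ((C₁ * ((1 + π / 2) * Real.exp R)) / c) * τ * (r ^ α * r) := by
        field_simp
    _ = ((C₁ * ((1 + π / 2) * Real.exp R)) / c) * τ * r ^ (α + 1) := by
        rw [Real.rpow_add_one hr.ne']

/-- Consistency of the fractional power of the backward Euler symbol: there
exists `C` depending only on `θ` and `α` with
`|((1 − e^{−zτ})/τ)^α − z^α| ≤ C τ |z|^{α+1}` for all `τ > 0` and `z` with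
`|arg z| = θ` and `|z| ≤ π/(τ sin θ)`. -/
theorem backward_euler_symbol_pow_consistency (θ α : ℝ)
    (hθ₁ : Real.pi / 2 < θ) (hθ₂ : θ < Real.pi) (hα₀ : 0 < α) (hα₁ : α < 1) :
    ∃ C : ℝ, 0 < C ∧
      ∀ (τ : ℝ), 0 < τ → ∀ z : ℂ, z ≠ 0 → |z.arg| = θ →
        ‖z‖ ≤ Real.pi / (τ * Real.sin θ) →
        ‖((1 - Complex.exp (-z * τ)) / τ) ^ (α : ℂ) - z ^ (α : ℂ)‖
          ≤ C * τ * ‖z‖ ^ (α + 1) := by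
  have hπ : (0:ℝ) < π := Real.pi_pos
  have hsθ : 0 < Real.sin θ := Real.sin_pos_of_pos_of_lt_pi (by linarith) hθ₂
  have hcθ : Real.cos θ < 0 := Real.cos_neg_of_pi_div_two_lt_of_lt hθ₁ (by linarith)
  have hexpR := Real.exp_pos (π / Real.sin θ)
  refine ⟨((1 + Real.exp (π / Real.sin θ) * (π / Real.sin θ)) *
      ((1 + π / 2) * Real.exp (π / Real.sin θ))) / (-Real.cos θ), ?_, ?_⟩
  · apply div_pos
    · have h1 : 0 < π / Real.sin θ := by positivity
      have h2 : 0 < 1 + Real.exp (π / Real.sin θ) * (π / Real.sin θ) := by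
        nlinarith [mul_pos hexpR h1]
      have h3 : 0 < (1 + π / 2) * Real.exp (π / Real.sin θ) := by nlinarith
      exact mul_pos h2 h3
    · linarith
  · intro τ hτ z hz harg hle
    have hθ0 : 0 ≤ θ := by linarith
    rcases (abs_eq hθ0).mp harg with h | h
    · exact master hθ₁ hθ₂ hα₀ hα₁ hτ hz h hle
    · -- conjugate case
      set w := (starRingEnd ℂ) z with hwdef
      have hw0 : w ≠ 0 := by
        simp [hwdef, map_eq_zero, hz]
      have hznπ : z.arg ≠ π := by rw [h]; intro hc; linarith
      have hargw : w.arg = θ := by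
        rw [hwdef, Complex.arg_conj, if_neg hznπ, h, neg_neg]
      have habsw : ‖w‖ = ‖z‖ := by
        rw [hwdef, Complex.norm_conj]
      have hlew : ‖w‖ ≤ π / (τ * Real.sin θ) := by rw [habsw]; exact hle
      have H := master hθ₁ hθ₂ hα₀ hα₁ hτ hw0 hargw hlew
      set X := (1 - Complex.exp (-z * τ)) / (τ:ℂ) with hXdef
      have hXconj : (1 - Complex.exp (-w * τ)) / (τ:ℂ) = (starRingEnd ℂ) X := by
        rw [hXdef]
        simp only [map_div₀, map_sub, map_one, ← Complex.exp_conj, map_mul, map_neg,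
          Complex.conj_ofReal, Complex.conj_conj, hwdef]
      obtain ⟨hWim, hWπ⟩ := delta_facts hθ₁ hθ₂ hτ hw0 hargw hlew
      have hXπ : X.arg ≠ π := by
        intro hc
        rw [Complex.arg_eq_pi_iff] at hc
        apply hWπ
        rw [Complex.arg_eq_pi_iff, hXconj]
        refine ⟨?_, ?_⟩
        · simpa using hc.1
        · simpa using hc.2
      have key : ‖((1 - Complex.exp (-w * τ)) / (τ:ℂ)) ^ (α:ℂ) - w ^ (α:ℂ)‖ =
          ‖X ^ (α:ℂ) - z ^ (α:ℂ)‖ := by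
        rw [hXconj, hwdef]
        rw [Complex.conj_cpow _ _ hXπ, Complex.conj_cpow _ _ hznπ]
        rw [Complex.conj_ofReal]
        rw [← map_sub, Complex.norm_conj]
      rw [← key, ← habsw]
      exact H
end

section
/- Let H be a real Hilbert space, V ⊆ H a dense subspace which is a Hilbert space with inner product ⟨·,·⟩_V continuously embedded in H, and let z be a complex number in the sector Σ_θ = {z ≠ 0 : |arg z| ≤ θ} with θ ∈ (π/2, π) and α ∈ (0,1). Suppose u ∈ V solves z^α(u, χ)_H + ⟨u, χ⟩_V = f(χ) for all χ ∈ V, where f ∈ V*. Then ‖u‖_V ≤ C‖f‖_{V*} and |z|^{α/2} ‖u‖_H ≤ C ‖f‖_{V*}, where C depends only on θ and α. -/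
open Complex Real

private lemma sector_aux (W a b R K : ℝ) (hW : 0 ≤ W) (ha : 0 ≤ a) (hb : 0 ≤ b)
    (hK1 : K ≤ 1) (hR : 2 * (a * b) * (W * K) ≤ 2 * (a * b) * R) :
    (1 + K) / 2 * (W * a + b) ^ 2 ≤ a ^ 2 * W ^ 2 + 2 * (a * b) * R + b ^ 2 := by
  nlinarith [sq_nonneg (W * a - b)]

set_option maxHeartbeats 1600000 in
/-- Abstract resolvent-type a priori estimate: if `u ∈ V` solves
`z^α (u,χ)_H + ⟨u,χ⟩_V = f(χ)` for all `χ ∈ V`, with `z` in the sector `Σ_θ`,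
then `‖u‖_V ≤ C‖f‖_{V*}` and `|z|^{α/2}‖u‖_H ≤ C‖f‖_{V*}`, with `C` depending
only on `θ` and `α`. -/
theorem abstract_resolvent_apriori (θ α : ℝ)
    (hθ₁ : Real.pi / 2 < θ) (hθ₂ : θ < Real.pi) (hα₀ : 0 < α) (hα₁ : α < 1) :
    ∃ C : ℝ, 0 < C ∧
      ∀ (V H : Type) (_ : NormedAddCommGroup V) (_ : InnerProductSpace ℝ V)
        (_ : CompleteSpace V)
        (_ : NormedAddCommGroup H) (_ : InnerProductSpace ℝ H)
        (_ : CompleteSpace H)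
        (ι : V →L[ℝ] H) (_hι : Function.Injective ι)
        (_hdense : DenseRange ι)
        (f : V →L[ℝ] ℂ) (z : ℂ) (u : V),
        z ≠ 0 → |z.arg| ≤ θ →
        (∀ χ : V, z ^ (α : ℂ) * ((inner ℝ (ι u) (ι χ) : ℝ) : ℂ)
            + ((inner ℝ u χ : ℝ) : ℂ) = f χ) →
        ‖u‖ ≤ C * ‖f‖ ∧ ‖z‖ ^ (α / 2) * ‖ι u‖ ≤ C * ‖f‖ := by
  have hπ : (0:ℝ) < Real.pi := Real.pi_pos
  have hθ0 : 0 < θ := lt_trans (by positivity) hθ₁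
  have hαθπ : α * θ < Real.pi := by nlinarith
  have hαθ0 : 0 < α * θ := mul_pos hα₀ hθ0
  have hcos : -1 < Real.cos (α * θ) := by
    have h := Real.cos_lt_cos_of_nonneg_of_le_pi (le_of_lt hαθ0) le_rfl hαθπ
    rwa [Real.cos_pi] at h
  set c : ℝ := (1 + Real.cos (α * θ)) / 2 with hc_def
  have hc : 0 < c := by simp only [hc_def]; linarith
  have hc1 : c ≤ 1 := by
    have := Real.cos_le_one (α * θ); simp only [hc_def]; linarith
  have hsc : 0 < Real.sqrt c := Real.sqrt_pos.mpr hc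
  refine ⟨1 / Real.sqrt c, by positivity, ?_⟩
  intro V H _ _ _ _ _ _ ι _hι _hdense f z u hz hargz hu
  set C : ℝ := 1 / Real.sqrt c with hC_def
  have hC : 0 < C := by positivity
  -- abbreviations
  set w : ℂ := z ^ (α : ℂ) with hw_def
  set a : ℝ := ‖ι u‖ ^ 2 with ha_def
  set b : ℝ := ‖u‖ ^ 2 with hb_def
  clear_value w a b
  have ha0 : 0 ≤ a := ha_def ▸ sq_nonneg _
  have hb0 : 0 ≤ b := hb_def ▸ sq_nonneg _
  -- properties of w
  have hwexp : w = Complex.exp (Complex.log z * (α : ℂ)) := by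
    rw [hw_def]; exact Complex.cpow_def_of_ne_zero hz (α : ℂ)
  have hre_mul : (Complex.log z * (α : ℂ)).re = α * Real.log (‖z‖) := by
    simp [Complex.mul_re, Complex.log_re]; ring
  have him_mul : (Complex.log z * (α : ℂ)).im = α * z.arg := by
    simp [Complex.mul_im, Complex.log_im]; ring
  have habsw : ‖w‖ = Real.exp (α * Real.log (‖z‖)) := by
    rw [hwexp, Complex.norm_exp, hre_mul]
  have habsw' : ‖w‖ = (‖z‖) ^ α := by
    rw [habsw, Real.rpow_def_of_pos (norm_pos_iff.mpr hz), mul_comm]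
  have hrew : w.re = ‖w‖ * Real.cos (α * z.arg) := by
    rw [hwexp, Complex.exp_re, hre_mul, him_mul, ← habsw, hwexp]
  -- cosine bound
  have hcosb : Real.cos (α * θ) ≤ Real.cos (α * z.arg) := by
    rw [← Real.cos_abs (α * z.arg)]
    apply Real.cos_le_cos_of_nonneg_of_le_pi (abs_nonneg _) (le_of_lt hαθπ)
    calc |α * z.arg| = α * |z.arg| := by rw [abs_mul, abs_of_pos hα₀]
      _ ≤ α * θ := by nlinarith [abs_nonneg z.arg]
  have hrew_ge : ‖w‖ * Real.cos (α * θ) ≤ w.re := by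
    rw [hrew]
    exact mul_le_mul_of_nonneg_left hcosb (norm_nonneg w)
  -- the equation at χ = u
  have heq : w * (a : ℂ) + (b : ℂ) = f u := by
    have h := hu u
    rw [real_inner_self_eq_norm_sq, real_inner_self_eq_norm_sq] at h
    rw [ha_def, hb_def]; exact h
  -- |f u| ≤ ‖f‖ ‖u‖
  have hfu : ‖f u‖ ≤ ‖f‖ * ‖u‖ := by
    have := f.le_opNorm u
    exact this
  -- key sector estimate
  have hsq : c * (‖w‖ * a + b) ^ 2 ≤ (‖f u‖) ^ 2 := by
    rw [← heq]
    have habs2 : (‖w * (a:ℂ) + (b:ℂ)‖) ^ 2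
        = (w.re * a + b) ^ 2 + (w.im * a) ^ 2 := by
      rw [Complex.sq_norm, Complex.normSq_apply]
      simp [Complex.add_re, Complex.add_im, Complex.mul_re, Complex.mul_im]
      ring
    rw [habs2]
    have hwabs : w.re ^ 2 + w.im ^ 2 = (‖w‖) ^ 2 := by
      rw [Complex.sq_norm, Complex.normSq_apply]; ring
    have hRHS : (w.re * a + b) ^ 2 + (w.im * a) ^ 2
        = a ^ 2 * (‖w‖) ^ 2 + 2 * (a * b) * w.re + b ^ 2 := by
      rw [← hwabs]; ring
    rw [hRHS, hc_def]
    have h := mul_le_mul_of_nonneg_left hrew_ge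
      (mul_nonneg (by norm_num) (mul_nonneg ha0 hb0) : (0:ℝ) ≤ 2 * (a * b))
    exact sector_aux _ _ _ _ _ (norm_nonneg w) ha0 hb0
      (Real.cos_le_one _) h
  have hkey : Real.sqrt c * (‖w‖ * a + b) ≤ ‖f‖ * ‖u‖ := by
    have hX : 0 ≤ ‖w‖ * a + b := by positivity
    have h1 : (Real.sqrt c * (‖w‖ * a + b)) ^ 2 ≤ (‖f‖ * ‖u‖) ^ 2 := by
      rw [mul_pow, Real.sq_sqrt (le_of_lt hc)]
      exact le_trans hsq (by nlinarith [norm_nonneg (f u)])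
    have h2 := Real.sqrt_le_sqrt h1
    rwa [Real.sqrt_sq (by positivity), Real.sqrt_sq (by positivity)] at h2
  -- first conclusion
  have hwa0 : 0 ≤ ‖w‖ * a := mul_nonneg (norm_nonneg w) ha0
  have hfnn : 0 ≤ ‖f‖ := norm_nonneg f
  have h1 : ‖u‖ ≤ C * ‖f‖ := by
    rcases eq_or_lt_of_le (norm_nonneg u) with h | h
    · rw [← h]; positivity
    · have hb_le : Real.sqrt c * b ≤ ‖f‖ * ‖u‖ := by nlinarith
      rw [hb_def] at hb_le
      have : Real.sqrt c * ‖u‖ ≤ ‖f‖ := by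
        rw [pow_two] at hb_le; nlinarith
      rw [hC_def]
      rw [div_mul_eq_mul_div, le_div_iff₀ hsc, mul_comm]
      linarith
  refine ⟨h1, ?_⟩
  -- second conclusion
  have h2a : ‖w‖ * a ≤ ‖f‖ * ‖u‖ / Real.sqrt c := by
    rw [le_div_iff₀ hsc, mul_comm]
    nlinarith
  have h2b : ‖w‖ * a ≤ (C * ‖f‖) ^ 2 := by
    have : ‖f‖ * ‖u‖ ≤ ‖f‖ * (C * ‖f‖) := mul_le_mul_of_nonneg_left h1 hfnn
    calc ‖w‖ * a ≤ ‖f‖ * ‖u‖ / Real.sqrt c := h2a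
      _ ≤ ‖f‖ * (C * ‖f‖) / Real.sqrt c := by gcongr
      _ = (C * ‖f‖) ^ 2 := by rw [hC_def]; field_simp
  have hsqr : ((‖z‖) ^ (α / 2) * ‖ι u‖) ^ 2 = ‖w‖ * a := by
    rw [habsw', mul_pow, ha_def, ← Real.rpow_natCast ((‖z‖) ^ (α/2)) 2,
      ← Real.rpow_mul (norm_nonneg z)]
    norm_num
  have h2 : ((‖z‖) ^ (α / 2) * ‖ι u‖) ^ 2 ≤ (C * ‖f‖) ^ 2 := by
    rw [hsqr]; exact h2b
  have h3 := Real.sqrt_le_sqrt h2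
  rwa [Real.sqrt_sq (by positivity), Real.sqrt_sq (by positivity)] at h3
end
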